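/- Generalized multiflattening lower bound: let φ ∈ H_A ⊗ H_B ⊗ H_{C₁} ⊗ ... ⊗ H_{C_m} have a decomposition as a sum of r tensors that are simple with respect to the factorization A, B, C₁, ..., C_m. For linear maps P_i : H_{C_i} → H_{X_i} ⊗ H_{Y_i}, define CR(P_i) as the maximum Schmidt rank of P_i(c) over vectors c ∈ H_{C_i}, and let φ^{(P)} = (1_{AB} ⊗ P₁ ⊗ ... ⊗ P_m)(φ) viewed as a 2-tensor between A X₁...X_m and B Y₁...Y_m. Then rk(φ^{(P)}) ≤ r · Π_{i=1}^m CR(P_i); equivalently R(φ) ≥ rk(φ^{(P)}) / Π_i CR(P_i). -/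

import Mathlib

open Finset Matrix


/-- The commutative rank `CR(P)` of a generalized flattening map
`P : H_C → H_X ⊗ H_Y` (written in coordinates): the maximum Schmidt rank of `P c`
over vectors `c ∈ H_C`. -/
noncomputable def commRank {γ δ ρ : Type*} [Fintype δ] [Fintype ρ]
    (P : (γ → ℂ) →ₗ[ℂ] (δ × ρ → ℂ)) : ℕ :=
  ⨆ c : γ → ℂ, (Matrix.of fun (d : δ) (r : ρ) => P c (d, r)).rank

/-- The generalized multiflattening of `φ ∈ H_A ⊗ H_B ⊗ ⨂ᵢ H_{Cᵢ}` by the maps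
`Pᵢ : H_{Cᵢ} → H_{Xᵢ} ⊗ H_{Yᵢ}`, viewed (in coordinates) as a matrix between
`A X₁…X_m` and `B Y₁…Y_m`. -/
noncomputable def multiFlattening {ι α β : Type*} [Fintype ι] [DecidableEq ι] {γ δ ρ : ι → Type*}
    [∀ i, Fintype (γ i)] [∀ i, DecidableEq (γ i)]
    (P : ∀ i, (γ i → ℂ) →ₗ[ℂ] (δ i × ρ i → ℂ))
    (φ : α → β → (∀ i, γ i) → ℂ) :
    Matrix (α × ∀ i, δ i) (β × ∀ i, ρ i) ℂ :=
  Matrix.of fun p q =>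
    ∑ g : ∀ i, γ i, (∏ i, P i (Pi.single (g i) 1) (p.2 i, q.2 i)) * φ p.1 q.1 g

/-- Generalized multiflattening lower bound: if `φ` is a sum of `r` simple tensors
with respect to the factorization `A, B, C₁, …, C_m`, then the rank of its
generalized multiflattening is at most `r · ∏ᵢ CR(Pᵢ)`; equivalently
`R(φ) ≥ rk(φ^{(P)}) / ∏ᵢ CR(Pᵢ)`. -/
lemma rank_le_of_decomp {m n S : Type*} [Fintype m] [Fintype n] [Fintype S]
    (A : Matrix m n ℂ) (f : S → m → ℂ) (g : S → n → ℂ)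
    (h : ∀ p q, A p q = ∑ s, f s p * g s q) : A.rank ≤ Fintype.card S := by
  have hA : A = (Matrix.of fun p s => f s p) * (Matrix.of fun s q => g s q) := by
    ext p q
    simp [Matrix.mul_apply, h]
  rw [hA]
  exact le_trans (Matrix.rank_mul_le_right _ _) (Matrix.rank_le_card_height _)

lemma exists_decomp {m n : Type*} [Fintype m] [Fintype n] (A : Matrix m n ℂ) :
    ∃ (f : Fin A.rank → m → ℂ) (g : Fin A.rank → n → ℂ),
      ∀ p q, A p q = ∑ s, f s p * g s q := by
  set W : Submodule ℂ (m → ℂ) := Submodule.span ℂ (Set.range Aᵀ) with hW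
  haveI : FiniteDimensional ℂ W := FiniteDimensional.span_of_finite ℂ (Set.finite_range _)
  have hr : Module.finrank ℂ W = A.rank := (A.rank_eq_finrank_span_cols).symm
  let e : Module.Basis (Fin A.rank) ℂ W := (Module.finBasis ℂ W).reindex (finCongr hr)
  refine ⟨fun s p => (e s : m → ℂ) p, fun s q => e.repr ⟨Aᵀ q, Submodule.subset_span ⟨q, rfl⟩⟩ s, ?_⟩
  intro p q
  have h1 : (⟨Aᵀ q, Submodule.subset_span ⟨q, rfl⟩⟩ : W)
      = ∑ s, e.repr ⟨Aᵀ q, Submodule.subset_span ⟨q, rfl⟩⟩ s • e s := (e.sum_repr _).symm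
  have h2 := congrArg (fun w : W => (w : m → ℂ) p) h1
  simpa [Submodule.coe_sum, Finset.sum_apply, mul_comm, -Module.Basis.sum_repr] using h2

lemma rank_le_commRank {γ δ ρ : Type*} [Fintype δ] [Fintype ρ]
    (P : (γ → ℂ) →ₗ[ℂ] (δ × ρ → ℂ)) (c : γ → ℂ) :
    (Matrix.of fun (d : δ) (r : ρ) => P c (d, r)).rank ≤ commRank P :=
  le_ciSup (f := fun c : γ → ℂ => (Matrix.of fun (d : δ) (r : ρ) => P c (d, r)).rank)
    ⟨Fintype.card ρ, by rintro x ⟨c, rfl⟩; exact Matrix.rank_le_card_width _⟩ c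

theorem multiflattening_rank_bound {ι α β : Type*} [Fintype ι] [Fintype α] [Fintype β]
    {γ δ ρ : ι → Type*} [∀ i, Fintype (γ i)] [∀ i, DecidableEq (γ i)]
    [∀ i, Fintype (δ i)] [∀ i, Fintype (ρ i)] [DecidableEq ι]
    (P : ∀ i, (γ i → ℂ) →ₗ[ℂ] (δ i × ρ i → ℂ))
    (φ : α → β → (∀ i, γ i) → ℂ) (r : ℕ)
    (a : Fin r → α → ℂ) (b : Fin r → β → ℂ) (c : Fin r → ∀ i, γ i → ℂ)
    (hφ : ∀ x y g, φ x y g = ∑ t, a t x * b t y * ∏ i, c t i (g i)) :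
    (multiFlattening P φ).rank ≤ r * ∏ i, commRank (P i) := by
  classical
  -- the matrices P i (c t i)
  set N : Fin r → ∀ i, Matrix (δ i) (ρ i) ℂ :=
    fun t i => Matrix.of fun d x => P i (c t i) (d, x) with hN
  -- rank-one decompositions of each N t i
  have hdec := fun t i => exists_decomp (N t i)
  choose f g hfg using hdec
  -- key: expanding P i (c t i) in the single basis
  have key : ∀ t i (d : δ i) (x : ρ i),
      (∑ y : γ i, c t i y * P i (Pi.single y 1) (d, x)) = N t i d x := by
    intro t i d x
    have hc : c t i = ∑ y : γ i, c t i y • (Pi.single y 1 : γ i → ℂ) := by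
      funext z
      simp [Pi.single_apply, Finset.sum_apply, mul_comm]
    simp only [hN, Matrix.of_apply]
    conv_rhs => rw [hc]
    rw [map_sum]
    simp [Finset.sum_apply]
  -- main decomposition of the multiflattening
  have main : ∀ p q, multiFlattening P φ p q =
      ∑ s : Σ t : Fin r, ∀ i, Fin ((N t i).rank),
        (a s.1 p.1 * ∏ i, f s.1 i (s.2 i) (p.2 i)) *
        (b s.1 q.1 * ∏ i, g s.1 i (s.2 i) (q.2 i)) := by
    intro p q
    rw [← Finset.univ_sigma_univ, Finset.sum_sigma]
    simp only [multiFlattening, Matrix.of_apply, hφ, Finset.mul_sum]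
    rw [Finset.sum_comm]
    refine Finset.sum_congr rfl fun t _ => ?_
    have step1 : ∑ g : ∀ i, γ i,
        (∏ i, P i (Pi.single (g i) 1) (p.2 i, q.2 i)) * (a t p.1 * b t q.1 * ∏ i, c t i (g i))
        = a t p.1 * b t q.1 * ∏ i, N t i (p.2 i) (q.2 i) := by
      have : ∀ gg : ∀ i, γ i,
          (∏ i, P i (Pi.single (gg i) 1) (p.2 i, q.2 i)) * (a t p.1 * b t q.1 * ∏ i, c t i (gg i))
          = a t p.1 * b t q.1 * ∏ i, (c t i (gg i) * P i (Pi.single (gg i) 1) (p.2 i, q.2 i)) := by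
        intro gg
        rw [Finset.prod_mul_distrib]
        ring
      rw [Finset.sum_congr rfl fun gg _ => this gg, ← Finset.mul_sum]
      congr 1
      have expand : ∏ i, N t i (p.2 i) (q.2 i)
          = ∑ y ∈ Fintype.piFinset (fun i => (Finset.univ : Finset (γ i))),
              ∏ i, (c t i (y i) * P i (Pi.single (y i) 1) (p.2 i, q.2 i)) :=
        (Finset.prod_congr rfl fun i _ => (key t i (p.2 i) (q.2 i)).symm).trans
          (Finset.prod_univ_sum _ _)
      rw [expand, Fintype.piFinset_univ]
    rw [step1]
    -- now expand each N via its rank-one decomposition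
    have step2 : ∏ i, N t i (p.2 i) (q.2 i)
        = ∑ j : ∀ i, Fin ((N t i).rank), ∏ i, f t i (j i) (p.2 i) * g t i (j i) (q.2 i) := by
      have expand : ∏ i, N t i (p.2 i) (q.2 i)
          = ∑ j ∈ Fintype.piFinset (fun i => (Finset.univ : Finset (Fin ((N t i).rank)))),
              ∏ i, (f t i (j i) (p.2 i) * g t i (j i) (q.2 i)) :=
        (Finset.prod_congr rfl fun i _ => hfg t i (p.2 i) (q.2 i)).trans
          (Finset.prod_univ_sum _ _)
      rw [expand, Fintype.piFinset_univ]
    rw [step2, Finset.mul_sum]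
    refine Finset.sum_congr rfl fun j _ => ?_
    rw [Finset.prod_mul_distrib]
    ring
  -- conclude
  calc (multiFlattening P φ).rank
      ≤ Fintype.card (Σ t : Fin r, ∀ i, Fin ((N t i).rank)) :=
        rank_le_of_decomp _ _ _ main
    _ ≤ r * ∏ i, commRank (P i) := by
        rw [Fintype.card_sigma]
        simp only [Fintype.card_pi, Fintype.card_fin]
        calc ∑ t : Fin r, ∏ i, (N t i).rank
            ≤ ∑ t : Fin r, ∏ i, commRank (P i) :=
              Finset.sum_le_sum fun t _ => Finset.prod_le_prod' fun i _ =>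
                rank_le_commRank (P i) (c t i)
          _ = r * ∏ i, commRank (P i) := by simp [Finset.sum_const, Finset.card_univ]
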